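/- Let $Q=\{(x,u)\in X\times\mathbb{R}^{N_1} : u_i-u_j+\sum_{kl\in A}\alpha^{ij}_{kl}x_{kl}\le\beta^{ij}\ \text{for all}\ ij\in A_1\}$ where $X\subseteq\mathbb{R}^A$, $\alpha^{ij}\in\mathbb{R}^A$, $\beta^{ij}\in\mathbb{R}$. Then the projection of $Q$ onto the $x$-variables equals $P=\{x\in X : \sum_{ij\in C}\sum_{kl\in A}\alpha^{ij}_{kl}x_{kl}\le\sum_{ij\in C}\beta^{ij}\ \text{for all directed cycles}\ C\in\mathcal{C}_1\}$. -/

import Mathlib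

/-- Weight of a directed cycle given by nodes `v 0, …, v (k-1)` with arcs
`(v i, v ((i+1) % k))`. -/
def cycleSum {α : Type} (c : α → α → ℝ) (k : ℕ) (v : ℕ → α) : ℝ :=
  ∑ i ∈ Finset.range k, c (v i) (v ((i + 1) % k))

/-- A directed cycle: at least two distinct nodes `v 0, …, v (k-1)`. -/
def IsCycle {α : Type} (k : ℕ) (v : ℕ → α) : Prop :=
  2 ≤ k ∧ ∀ i < k, ∀ j < k, v i = v j → i = j

/-- A directed cycle avoiding node `0` (the paper's node 1), i.e. a member of `𝒞₁`. -/
def IsCycle1 {n : ℕ} (k : ℕ) (v : ℕ → Fin (n + 1)) : Prop :=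
  IsCycle k v ∧ ∀ i < k, v i ≠ 0

/-- The (restricted) assignment polytope `P_AP`. -/
def memPAP {n : ℕ} (x : Fin (n + 1) → Fin (n + 1) → ℝ) : Prop :=
  (∀ i j : Fin (n + 1), i ≠ j → 0 ≤ x i j ∧ x i j ≤ 1) ∧
  (∀ i : Fin (n + 1), ∑ j ∈ Finset.univ.erase i, x i j = 1) ∧
  (∀ i : Fin (n + 1), ∑ j ∈ Finset.univ.erase i, x j i = 1)

/-- Cost of a walk given as a list of vertices. -/
def lcost {V : Type} (c : V → V → ℝ) : List V → ℝ
  | [] => 0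
  | [_] => 0
  | a :: b :: t => c a b + lcost c (b :: t)

lemma lcost_cons_cons {V : Type} (c : V → V → ℝ) (a b : V) (t : List V) :
    lcost c (a :: b :: t) = c a b + lcost c (b :: t) := rfl

lemma lcost_eq_sum {V : Type} (c : V → V → ℝ) (d : V) (l : List V) :
    lcost c l = ∑ j ∈ Finset.range (l.length - 1), c (l.getD j d) (l.getD (j + 1) d) := by
  induction l with
  | nil => simp [lcost]
  | cons a t ih =>
    cases t with
    | nil => simp [lcost]
    | cons b t' =>
      rw [lcost_cons_cons, ih]
      have hlen : (a :: b :: t').length - 1 = (b :: t').length - 1 + 1 := by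
        simp
      rw [hlen, Finset.sum_range_succ']
      simp [List.getD_cons_succ]
      ring

lemma lcost_append {V : Type} (c : V → V → ℝ) (p : List V) (y : V) (q : List V) :
    lcost c (p ++ y :: q) = lcost c (p ++ [y]) + lcost c (y :: q) := by
  induction p with
  | nil => simp [lcost]
  | cons a p' ih =>
    cases p' with
    | nil => simp [lcost]
    | cons b p'' =>
      simp only [List.cons_append, lcost_cons_cons] at ih ⊢
      rw [ih]
      ring

theorem stmt_1 (n : ℕ) (hn : 4 ≤ n + 1)
    (X : (Fin (n + 1) → Fin (n + 1) → ℝ) → Prop)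
    (α : Fin (n + 1) → Fin (n + 1) → Fin (n + 1) → Fin (n + 1) → ℝ)
    (β : Fin (n + 1) → Fin (n + 1) → ℝ)
    (x : Fin (n + 1) → Fin (n + 1) → ℝ) :
    (X x ∧ ∃ u : Fin (n + 1) → ℝ, ∀ i j : Fin (n + 1), i ≠ 0 → j ≠ 0 → i ≠ j →
        u i - u j + ∑ k : Fin (n + 1), ∑ l ∈ Finset.univ.erase k, α i j k l * x k l ≤ β i j)
    ↔ (X x ∧ ∀ (k : ℕ) (v : ℕ → Fin (n + 1)), IsCycle1 k v →
        ∑ i ∈ Finset.range k,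
            (∑ p : Fin (n + 1), ∑ q ∈ Finset.univ.erase p,
              α (v i) (v ((i + 1) % k)) p q * x p q)
          ≤ ∑ i ∈ Finset.range k, β (v i) (v ((i + 1) % k))) := by
  obtain ⟨m, rfl⟩ : ∃ m, n = m + 3 := ⟨n - 3, by omega⟩
  constructor
  · rintro ⟨hX, u, hu⟩
    refine ⟨hX, ?_⟩
    rintro k v ⟨⟨hk2, hinj⟩, hne⟩
    have hkpos : 0 < k := by omega
    have htel : ∑ i ∈ Finset.range k, u (v ((i + 1) % k)) = ∑ i ∈ Finset.range k, u (v i) := by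
      refine Finset.sum_nbij' (fun i => (i + 1) % k) (fun i => (i + (k - 1)) % k)
        ?_ ?_ ?_ ?_ ?_
      · intro a ha; exact Finset.mem_range.mpr (Nat.mod_lt _ hkpos)
      · intro a ha; exact Finset.mem_range.mpr (Nat.mod_lt _ hkpos)
      · intro a ha
        rw [Finset.mem_range] at ha
        show ((a + 1) % k + (k - 1)) % k = a
        rw [Nat.mod_add_mod]
        have h9 : a + 1 + (k - 1) = a + k := by omega
        rw [h9, Nat.add_mod_right, Nat.mod_eq_of_lt ha]
      · intro a ha
        rw [Finset.mem_range] at ha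
        show ((a + (k - 1)) % k + 1) % k = a
        rw [Nat.mod_add_mod]
        have h9 : a + (k - 1) + 1 = a + k := by omega
        rw [h9, Nat.add_mod_right, Nat.mod_eq_of_lt ha]
      · intro a ha; rfl
    have hterm : ∀ i ∈ Finset.range k,
        (∑ p : Fin (m + 3 + 1), ∑ q ∈ Finset.univ.erase p,
          α (v i) (v ((i + 1) % k)) p q * x p q)
          ≤ β (v i) (v ((i + 1) % k)) - (u (v i) - u (v ((i + 1) % k))) := by
      intro i hi
      rw [Finset.mem_range] at hi
      have h1 : v i ≠ 0 := hne i hi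
      have h2 : v ((i + 1) % k) ≠ 0 := hne _ (Nat.mod_lt _ hkpos)
      have h3 : v i ≠ v ((i + 1) % k) := by
        intro h
        have heq := hinj i hi ((i + 1) % k) (Nat.mod_lt _ hkpos) h
        rcases Nat.lt_or_ge (i + 1) k with h' | h'
        · rw [Nat.mod_eq_of_lt h'] at heq; omega
        · have : i + 1 = k := by omega
          rw [this, Nat.mod_self] at heq; omega
      have := hu (v i) (v ((i + 1) % k)) h1 h2 h3
      linarith
    calc ∑ i ∈ Finset.range k,
            (∑ p : Fin (m + 3 + 1), ∑ q ∈ Finset.univ.erase p,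
              α (v i) (v ((i + 1) % k)) p q * x p q)
        ≤ ∑ i ∈ Finset.range k,
            (β (v i) (v ((i + 1) % k)) - (u (v i) - u (v ((i + 1) % k)))) :=
          Finset.sum_le_sum hterm
      _ = ∑ i ∈ Finset.range k, β (v i) (v ((i + 1) % k)) := by
          rw [Finset.sum_sub_distrib, Finset.sum_sub_distrib, htel]
          ring
  · rintro ⟨hX, hcyc⟩
    refine ⟨hX, ?_⟩
    set c : Fin (m + 3 + 1) → Fin (m + 3 + 1) → ℝ := fun i j =>
      β i j - ∑ p : Fin (m + 3 + 1), ∑ q ∈ Finset.univ.erase p, α i j p q * x p q with hc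
    -- bridge: cycles given as nodup lists have nonnegative cost
    have bridge : ∀ L : List (Fin (m + 3 + 1)), L.Nodup → 2 ≤ L.length →
        (∀ y ∈ L, y ≠ 0) → 0 ≤ lcost c (L ++ [L.getD 0 0]) := by
      intro L hnd hlen h0
      set k := L.length with hk
      set v : ℕ → Fin (m + 3 + 1) := fun j => L.getD (j % k) 0 with hv
      have hcy : IsCycle1 k v := by
        refine ⟨⟨hlen, ?_⟩, ?_⟩
        · intro i hi j hj hij
          rw [hv] at hij
          simp only at hij
          rw [Nat.mod_eq_of_lt hi, Nat.mod_eq_of_lt hj,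
            List.getD_eq_getElem L 0 hi, List.getD_eq_getElem L 0 hj] at hij
          exact (hnd.getElem_inj_iff).mp hij
        · intro i hi
          rw [hv]
          simp only
          rw [Nat.mod_eq_of_lt hi, List.getD_eq_getElem L 0 hi]
          exact h0 _ (List.getElem_mem hi)
      have hineq := hcyc k v hcy
      have hsum : lcost c (L ++ [L.getD 0 0]) =
          ∑ i ∈ Finset.range k, c (v i) (v ((i + 1) % k)) := by
        rw [lcost_eq_sum c 0]
        have hlen2 : (L ++ [L.getD 0 0]).length - 1 = k := by simp [hk]
        rw [hlen2]
        refine Finset.sum_congr rfl ?_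
        intro j hj
        rw [Finset.mem_range] at hj
        have e1 : (L ++ [L.getD 0 0]).getD j 0 = v j := by
          simp only [hv]
          rw [List.getD_append _ _ _ _ (hk ▸ hj), Nat.mod_eq_of_lt hj]
        have e2 : (L ++ [L.getD 0 0]).getD (j + 1) 0 = v ((j + 1) % k) := by
          rcases Nat.lt_or_ge (j + 1) k with h' | h'
          · simp only [hv]
            rw [List.getD_append _ _ _ _ (hk ▸ h')]
            simp [Nat.mod_eq_of_lt h']
          · have hjk : j + 1 = k := by omega
            simp only [hv, hjk, Nat.mod_self, Nat.zero_mod]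
            rw [List.getD_append_right _ _ _ _ hk.ge]
            have h9 : k - L.length = 0 := by omega
            rw [h9]
            rfl
        rw [e1, e2]
      rw [hsum]
      have : ∑ i ∈ Finset.range k, c (v i) (v ((i + 1) % k)) =
          ∑ i ∈ Finset.range k, β (v i) (v ((i + 1) % k)) -
          ∑ i ∈ Finset.range k, (∑ p : Fin (m + 3 + 1), ∑ q ∈ Finset.univ.erase p,
            α (v i) (v ((i + 1) % k)) p q * x p q) := by
        rw [← Finset.sum_sub_distrib]
      rw [this]
      linarith
    -- the sink
    set s : Fin (m + 3 + 1) := 1 with hs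
    have hs0 : s ≠ 0 := by
      rw [hs]
      intro h
      have h9 := congrArg Fin.val h
      simp [Fin.val_one] at h9
    -- Good paths
    set Good : Fin (m + 3 + 1) → List (Fin (m + 3 + 1)) → Prop := fun i l =>
      l.head? = some i ∧ l.getLast? = some s ∧ l.Nodup ∧ ∀ y ∈ l, y ≠ 0 with hGood
    have key : ∀ i : Fin (m + 3 + 1), i ≠ 0 →
        ∃ l, Good i l ∧ ∀ l', Good i l' → lcost c l ≤ lcost c l' := by
      intro i hi
      have hfin : {l : List (Fin (m + 3 + 1)) | Good i l}.Finite := by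
        have hnodup : {l : List (Fin (m + 3 + 1)) | l.Nodup}.Finite :=
          Set.finite_coe_iff.mp
            (inferInstanceAs (Finite {l : List (Fin (m + 3 + 1)) // l.Nodup}))
        apply Set.Finite.subset hnodup
        intro l hl
        exact hl.2.2.1
      have hne : {l : List (Fin (m + 3 + 1)) | Good i l}.Nonempty := by
        by_cases his : i = s
        · refine ⟨[i], rfl, ?_, List.nodup_singleton i, ?_⟩
          · rw [his]; rfl
          · intro y hy
            rw [List.mem_singleton] at hy
            rw [hy]; exact hi
        · refine ⟨[i, s], rfl, rfl, ?_, ?_⟩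
          · simp [his]
          · intro y hy
            rcases List.mem_cons.mp hy with h | h
            · rw [h]; exact hi
            · rw [List.mem_singleton] at h
              rw [h]; exact hs0
      obtain ⟨l, hl, hmin⟩ := Set.exists_min_image _ (lcost c) hfin hne
      exact ⟨l, hl, fun l' hl' => hmin l' hl'⟩
    choose f hf hmin using key
    refine ⟨fun i => if h : i = 0 then 0 else lcost c (f i h), ?_⟩
    intro i j hi hj hij
    simp only [dif_neg hi, dif_neg hj]
    suffices h : lcost c (f i hi) ≤ c i j + lcost c (f j hj) by
      rw [hc] at h
      simp only at h
      linarith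
    obtain ⟨hhead, hlast, hnd, h0⟩ := hf j hj
    by_cases hmem : i ∈ f j hj
    · -- i occurs on the optimal path to j
      obtain ⟨p, q, hpq⟩ := List.append_of_mem hmem
      have hp : ∃ p', p = j :: p' := by
        cases p with
        | nil =>
          exfalso
          rw [hpq] at hhead
          simp at hhead
          exact hij hhead
        | cons a p' =>
          rw [hpq] at hhead
          simp at hhead
          exact ⟨p', by rw [hhead]⟩
      obtain ⟨p', rfl⟩ := hp
      rw [hpq] at hnd hlast h0
      obtain ⟨hnd1, hnd2, hdisj⟩ := List.nodup_append'.mp hnd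
      have hinotp : i ∉ j :: p' := fun h => hdisj h List.mem_cons_self
      -- the suffix i :: q is a good path from i
      have hgood : Good i (i :: q) := by
        refine ⟨rfl, ?_, hnd2, ?_⟩
        · rw [List.getLast?_append] at hlast
          cases hq : (i :: q).getLast? with
          | none => simp at hq
          | some a => rw [hq] at hlast; simp at hlast ⊢; rw [hlast]
        · intro y hy
          exact h0 y (List.mem_append_right _ hy)
      have h1 : lcost c (f i hi) ≤ lcost c (i :: q) := hmin i hi _ hgood
      -- the cycle i :: j :: p' (back to i)
      have hcyc0 : 0 ≤ lcost c ((i :: j :: p') ++ [i]) := by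
        apply bridge
        · exact List.nodup_cons.mpr ⟨hinotp, hnd1⟩
        · simp
        · intro y hy
          rcases List.mem_cons.mp hy with h | h
          · rw [h]; exact hi
          · exact h0 y (List.mem_append_left _ h)
      have hcc : lcost c ((i :: j :: p') ++ [i]) =
          c i j + lcost c ((j :: p') ++ [i]) := by
        rw [List.cons_append, List.cons_append, lcost_cons_cons, ← List.cons_append]
      rw [hcc] at hcyc0
      have hsplit : lcost c ((j :: p') ++ i :: q) =
          lcost c ((j :: p') ++ [i]) + lcost c (i :: q) :=
        lcost_append c _ _ _
      rw [hpq, hsplit]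
      linarith
    · -- i does not occur: prepend it
      have hq : ∃ t, f j hj = j :: t := by
        cases hl : f j hj with
        | nil => rw [hl] at hhead; simp at hhead
        | cons a t => rw [hl] at hhead; simp at hhead; exact ⟨t, by rw [hhead]⟩
      obtain ⟨t, ht⟩ := hq
      have hgood : Good i (i :: f j hj) := by
        refine ⟨rfl, ?_, List.nodup_cons.mpr ⟨hmem, hnd⟩, ?_⟩
        · rw [ht, List.getLast?_cons_cons, ← ht]
          exact hlast
        · intro y hy
          rcases List.mem_cons.mp hy with h | h
          · rw [h]; exact hi
          · exact h0 y h
      have h1 : lcost c (f i hi) ≤ lcost c (i :: f j hj) := hmin i hi _ hgood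
      rw [ht, lcost_cons_cons, ← ht] at h1
      exact h1
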